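/- arXiv:2203.11352 — 4 statements merged into one kernel-verified Lean document; each statement's English description precedes it below -/
import Mathlib

section
/- For a two-asset constant product market maker with trading function A(x1,x2)=x1*x2=k, if initial prices are (p1i,p2i) with stable state (x1i,x2i) and final prices are (p1f,p2f) with stable state (x1f,x2f), then the impermanent loss IL = (p1f*x1f + p2f*x2f)/(p1f*x1i + p2f*x2i) - 1 equals 2*sqrt(t)/(t+1) - 1, where t = (p2f/p1f)/(p2i/p1i). -/
/-- Impermanent loss for the two-asset constant product market maker
`x₁ * x₂ = k`: with stable states given explicitly by the Lagrange
multiplier solution, the impermanent loss equals `2√t/(t+1) - 1` where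
`t` is the quotient of final and initial exchange rates. -/
theorem stmt_0 (k p1i p2i p1f p2f x1i x2i x1f x2f t : ℝ)
    (hk : 0 < k) (hp1i : 0 < p1i) (hp2i : 0 < p2i) (hp1f : 0 < p1f) (hp2f : 0 < p2f)
    (hx1i : x1i = Real.sqrt k * Real.sqrt (p2i / p1i))
    (hx2i : x2i = Real.sqrt k * Real.sqrt (p1i / p2i))
    (hx1f : x1f = Real.sqrt k * Real.sqrt (p2f / p1f))
    (hx2f : x2f = Real.sqrt k * Real.sqrt (p1f / p2f))
    (ht : t = (p2f / p1f) / (p2i / p1i)) :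
    (p1f * x1f + p2f * x2f) / (p1f * x1i + p2f * x2i) - 1
      = 2 * Real.sqrt t / (t + 1) - 1 := by
  set A := Real.sqrt (p2f / p1f) with hA
  set B := Real.sqrt (p2i / p1i) with hB
  have hApos : 0 < A := Real.sqrt_pos.2 (by positivity)
  have hBpos : 0 < B := Real.sqrt_pos.2 (by positivity)
  have hKpos : 0 < Real.sqrt k := Real.sqrt_pos.2 hk
  have hA2 : A ^ 2 = p2f / p1f := Real.sq_sqrt (by positivity)
  have hB2 : B ^ 2 = p2i / p1i := Real.sq_sqrt (by positivity)
  have hAinv : Real.sqrt (p1f / p2f) = A⁻¹ := by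
    rw [hA, ← Real.sqrt_inv, inv_div]
  have hBinv : Real.sqrt (p1i / p2i) = B⁻¹ := by
    rw [hB, ← Real.sqrt_inv, inv_div]
  have hst : Real.sqrt t = A / B := by
    rw [ht, Real.sqrt_div (by positivity)]
  have htv : t = A ^ 2 / B ^ 2 := by rw [ht, hA2, hB2]
  have hp2f : p2f = p1f * A ^ 2 := by
    rw [hA2]; field_simp
  have hp2i : p2i = p1i * B ^ 2 := by
    rw [hB2]; field_simp
  rw [hx1i, hx2i, hx1f, hx2f, hAinv, hBinv, hst, htv, hp2f]
  have hden : p1f * (Real.sqrt k * B) + p1f * A ^ 2 * (Real.sqrt k * B⁻¹) ≠ 0 := by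
    positivity
  have hden2 : A ^ 2 / B ^ 2 + 1 ≠ 0 := by positivity
  field_simp
  ring
end

section
/- For an n-asset constant product market maker x1*...*xn = k with initial prices p^i and final prices p^f (all positive) and corresponding stable states x^i, x^f, the impermanent loss IL = (sum_j p_j^f x_j^f)/(sum_j p_j^f x_j^i) - 1 equals (prod_{j=1}^n t_j)^(1/n) / ((1/n) * sum_{j=1}^n t_j) - 1, where t_j = (p_j^f/p_1^f)/(p_j^i/p_1^i). -/
open Finset in
/-- Impermanent loss for the `n`-asset constant product market maker: with
stable states given explicitly by `xⱼ = k^(1/n) (∏ pₗ)^(1/n) / pⱼ`, the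
impermanent loss equals `(∏ tⱼ)^(1/n) / ((1/n) ∑ tⱼ) - 1`, where
`tⱼ = (pⱼᶠ/p₁ᶠ)/(pⱼⁱ/p₁ⁱ)`. -/
theorem stmt_3 (n : ℕ) (hn : 0 < n) (k : ℝ) (hk : 0 < k)
    (pi pf xi xf t : Fin n → ℝ)
    (hpi : ∀ j, 0 < pi j) (hpf : ∀ j, 0 < pf j)
    (hxi : ∀ j, xi j = k ^ ((1 : ℝ) / n) * (∏ l, pi l) ^ ((1 : ℝ) / n) / pi j)
    (hxf : ∀ j, xf j = k ^ ((1 : ℝ) / n) * (∏ l, pf l) ^ ((1 : ℝ) / n) / pf j)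
    (ht : ∀ j, t j = (pf j / pf ⟨0, hn⟩) / (pi j / pi ⟨0, hn⟩)) :
    (∑ j, pf j * xf j) / (∑ j, pf j * xi j) - 1
      = (∏ j, t j) ^ ((1 : ℝ) / n) / ((1 / (n : ℝ)) * ∑ j, t j) - 1 := by
  set a := pi ⟨0, hn⟩ with ha
  set b := pf ⟨0, hn⟩ with hb
  have ha0 : 0 < a := hpi _
  have hb0 : 0 < b := hpf _
  set K := k ^ ((1 : ℝ) / n) with hK
  set P := (∏ l, pi l) ^ ((1 : ℝ) / n) with hP
  set Q := (∏ l, pf l) ^ ((1 : ℝ) / n) with hQ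
  have hPi0 : 0 < ∏ l, pi l := Finset.prod_pos fun l _ => hpi l
  have hPf0 : 0 < ∏ l, pf l := Finset.prod_pos fun l _ => hpf l
  have hK0 : 0 < K := Real.rpow_pos_of_pos hk _
  have hP0 : 0 < P := Real.rpow_pos_of_pos hPi0 _
  have hQ0 : 0 < Q := Real.rpow_pos_of_pos hPf0 _
  have hS0 : 0 < ∑ j, pf j / pi j :=
    Finset.sum_pos (fun j _ => div_pos (hpf j) (hpi j)) ⟨⟨0, hn⟩, mem_univ _⟩
  set S := ∑ j, pf j / pi j with hS
  -- numerator
  have hnum : (∑ j, pf j * xf j) = n * (K * Q) := by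
    have : ∀ j : Fin n, pf j * xf j = K * Q := by
      intro j
      rw [hxf j]
      field_simp
      exact div_self (hpf j).ne'
    rw [Finset.sum_congr rfl fun j _ => this j, Finset.sum_const, card_univ,
      Fintype.card_fin, nsmul_eq_mul]
  -- denominator
  have hden : (∑ j, pf j * xi j) = K * P * S := by
    rw [hS, Finset.mul_sum]
    refine Finset.sum_congr rfl fun j _ => ?_
    rw [hxi j]
    field_simp
  -- sum of t
  have hts : (∑ j, t j) = (a / b) * S := by
    rw [hS, Finset.mul_sum]
    refine Finset.sum_congr rfl fun j _ => ?_
    rw [ht j]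
    field_simp
  -- product of t
  have htp : (∏ j, t j) = ((∏ l, pf l) / (∏ l, pi l)) * (a / b) ^ n := by
    have : ∀ j : Fin n, t j = (pf j / pi j) * (a / b) := by
      intro j
      rw [ht j]
      field_simp
    rw [Finset.prod_congr rfl fun j _ => this j, Finset.prod_mul_distrib,
      Finset.prod_div_distrib, Finset.prod_const, card_univ, Fintype.card_fin]
  have htpow : (∏ j, t j) ^ ((1 : ℝ) / n) = Q / P * (a / b) := by
    rw [htp, Real.mul_rpow (by positivity) (by positivity),
      Real.div_rpow hPf0.le hPi0.le, one_div,
      Real.pow_rpow_inv_natCast (by positivity) hn.ne', hP, hQ, one_div]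
  rw [hnum, hden, hts, htpow]
  have hnn : (0:ℝ) < n := by exact_mod_cast hn
  field_simp
end

section
/- With W(m) = min_x [m·x + f(x)] the stable portfolio value function and W_{m_j}(m) = x_j(m), the impermanent loss between exchange rate vectors m^i and m^f equals IL = W(m^f)/P(m^f) - 1, where P(m) = W(m^i) + sum_{j=1}^{n-1} (m_j - m_j^i) W_{m_j}(m^i) is the first-order Taylor (linear) approximation of W at m^i. -/
open Finset in
/-- Impermanent loss in terms of the stable portfolio value function `W`:
with `x_n(m) = f(x(m))`, `m_n = 1`, and `W(m) = m·x(m) + f(x(m))`, the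
impermanent loss equals `W(m^f)/P(m^f) - 1` where
`P(m) = W(m^i) + ∑ (m_j - m^i_j) W_{m_j}(m^i)` is the linear approximation
of `W` at `m^i` (using `W_{m_j}(m^i) = x_j(m^i)`). -/
theorem stmt_9 (d : ℕ) (f : (Fin d → ℝ) → ℝ)
    (X : (Fin d → ℝ) → (Fin d → ℝ))
    (W : (Fin d → ℝ) → ℝ)
    (hW : ∀ p, W p = (∑ j, p j * X p j) + f (X p))
    (mi mf : Fin d → ℝ) (hmi : ∀ j, 0 < mi j) (hmf : ∀ j, 0 < mf j) :
    ((∑ j, mf j * X mf j) + f (X mf)) / ((∑ j, mf j * X mi j) + f (X mi)) - 1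
      = W mf / (W mi + ∑ j, (mf j - mi j) * X mi j) - 1 := by
  rw [hW, hW]
  congr 2
  simp only [sub_mul, Finset.sum_sub_distrib]
  ring
end

section
/- Let f : R_{>0}^{n-1} -> R_{>0} be strictly convex and suppose f is homogeneous of degree alpha_j in its j-th variable separately, for each j (i.e., f(x_1,...,c x_j,...,x_{n-1}) = c^{alpha_j} f(x)). Define W(m) = min_{x>0} [m·x + f(x)]. Then W is homogeneous of degree beta_j in m_j separately, where beta_j = alpha_j / (-1 + sum_{i=1}^{n-1} alpha_i). -/
open Finset in
/-- If `f` is strictly convex and homogeneous of degree `αⱼ` in each single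
coordinate `xⱼ`, then `W(m) = min_{x>0} [m·x + f(x)]` is homogeneous of degree
`βⱼ = αⱼ/(-1 + ∑ αᵢ)` in each single coordinate `mⱼ`. -/
theorem stmt_11 (d : ℕ) (f : (Fin d → ℝ) → ℝ) (α : Fin d → ℝ)
    (hfpos : ∀ x : Fin d → ℝ, (∀ j, 0 < x j) → 0 < f x)
    (hfconv : StrictConvexOn ℝ {x : Fin d → ℝ | ∀ j, 0 < x j} f)
    (hfhom : ∀ j, ∀ c : ℝ, 0 < c → ∀ x : Fin d → ℝ, (∀ l, 0 < x l) →
      f (Function.update x j (c * x j)) = c ^ (α j) * f x)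
    (X : (Fin d → ℝ) → (Fin d → ℝ))
    (hXpos : ∀ p, (∀ j, 0 < p j) → ∀ j, 0 < X p j)
    (hmin : ∀ p, (∀ j, 0 < p j) → ∀ y : Fin d → ℝ, (∀ j, 0 < y j) →
      (∑ j, p j * X p j) + f (X p) ≤ (∑ j, p j * y j) + f y)
    (W : (Fin d → ℝ) → ℝ)
    (hW : ∀ p, W p = (∑ j, p j * X p j) + f (X p)) :
    ∀ j, ∀ c : ℝ, 0 < c → ∀ p : Fin d → ℝ, (∀ l, 0 < p l) →
      W (Function.update p j (c * p j))
        = c ^ (α j / (-1 + ∑ i, α i)) * W p := by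
  intro j c hc p hp
  rcases Nat.eq_zero_or_pos d with hd | hd
  · subst hd; exact j.elim0
  set s : ℝ := -1 + ∑ i, α i with hsdef
  -- full multiplicative scaling lemma
  have hscale : ∀ t : Fin d → ℝ, (∀ l, 0 < t l) → ∀ x : Fin d → ℝ, (∀ l, 0 < x l) →
      f (fun l => t l * x l) = (∏ l, t l ^ α l) * f x := by
    intro t ht x hx
    have key : ∀ S : Finset (Fin d),
        f (fun l => if l ∈ S then t l * x l else x l) = (∏ l ∈ S, t l ^ α l) * f x := by
      intro S
      induction S using Finset.induction_on with
      | empty => simp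
      | @insert a S haS ih =>
        set g : Fin d → ℝ := fun l => if l ∈ S then t l * x l else x l with hg
        have hgpos : ∀ l, 0 < g l := by
          intro l; simp only [hg]; split
          · exact mul_pos (ht l) (hx l)
          · exact hx l
        have hga : g a = x a := by simp [hg, haS]
        have heq : (fun l => if l ∈ insert a S then t l * x l else x l)
            = Function.update g a (t a * g a) := by
          funext l
          by_cases hl : l = a
          · subst hl; simp [hga]
          · simp [Function.update, hl, hg, Finset.mem_insert, hl]
        rw [heq, hfhom a (t a) (ht a) g hgpos, ih, Finset.prod_insert haS, mul_assoc]
    have := key Finset.univ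
    simpa using this
  -- the exponent denominator is nonzero
  have hs0 : s ≠ 0 := by
    intro h0
    have hsum : (∑ i, α i) = 1 := by
      have : -1 + ∑ i, α i = 0 := by rw [← hsdef, h0]
      linarith
    have h1 : ∀ c : ℝ, 0 < c → f (fun _ => c) = c * f (fun _ => (1:ℝ)) := by
      intro e he
      calc f (fun _ => e) = f (fun l => (fun _ => e) l * (fun _ => (1:ℝ)) l) := by norm_num
        _ = (∏ l : Fin d, e ^ α l) * f (fun _ => (1:ℝ)) :=
            hscale (fun _ => e) (fun _ => he) (fun _ => (1:ℝ)) (fun _ => one_pos)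
        _ = e * f (fun _ => (1:ℝ)) := by
            rw [← Real.rpow_sum_of_pos he, hsum, Real.rpow_one]
    have hne : (fun _ => (1:ℝ)) ≠ (fun _ => (3:ℝ) : Fin d → ℝ) := by
      intro h
      have := congrFun h ⟨0, hd⟩
      norm_num at this
    have hmem1 : (fun _ => (1:ℝ)) ∈ {x : Fin d → ℝ | ∀ j, 0 < x j} := fun _ => one_pos
    have hmem3 : (fun _ => (3:ℝ)) ∈ {x : Fin d → ℝ | ∀ j, 0 < x j} := fun _ => by norm_num
    have hconv := hfconv.2 hmem1 hmem3 hne (by norm_num : (0:ℝ) < 1/2)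
      (by norm_num : (0:ℝ) < 1/2) (by norm_num : (1:ℝ)/2 + 1/2 = 1)
    have hmid : ((1:ℝ)/2) • (fun _ => (1:ℝ) : Fin d → ℝ) + ((1:ℝ)/2) • (fun _ => (3:ℝ)) 
        = (fun _ => (2:ℝ)) := by
      funext l; simp [Pi.add_apply]; norm_num
    rw [hmid] at hconv
    have h2 := h1 2 (by norm_num)
    have h3 := h1 3 (by norm_num)
    rw [h2, h3] at hconv
    simp only [smul_eq_mul] at hconv
    linarith
  set β : ℝ := α j / s with hβdef
  have hβ : β * s = α j := div_mul_cancel₀ _ hs0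
  -- key inequality
  have key : ∀ q : Fin d → ℝ, (∀ l, 0 < q l) → ∀ e : ℝ, 0 < e →
      W (Function.update q j (e * q j)) ≤ e ^ β * W q := by
    intro q hq e he
    set m : Fin d → ℝ := Function.update q j (e * q j) with hm
    have hmpos : ∀ l, 0 < m l := by
      intro l
      by_cases hl : l = j
      · rw [hl]; simp only [hm, Function.update_self]; exact mul_pos he (hq j)
      · simpa [hm, Function.update_of_ne hl] using hq l
    set t : Fin d → ℝ := Function.update (fun _ => e ^ β) j (e ^ (β - 1)) with ht
    have htpos : ∀ l, 0 < t l := by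
      intro l
      by_cases hl : l = j
      · rw [hl]; simp only [ht, Function.update_self]; exact Real.rpow_pos_of_pos he _
      · simp [ht, Function.update_of_ne hl]; exact Real.rpow_pos_of_pos he _
    set y : Fin d → ℝ := fun l => t l * X q l with hy
    have hypos : ∀ l, 0 < y l := fun l => mul_pos (htpos l) (hXpos q hq l)
    -- the product of t l ^ α l equals e ^ β
    have hprod : (∏ l, t l ^ α l) = e ^ β := by
      have h1 : ∀ l : Fin d, t l ^ α l = e ^ (β * α l - if l = j then α j else 0) := by
        intro l
        by_cases hl : l = j
        · rw [hl]
          simp only [ht, Function.update_self, if_pos rfl]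
          rw [← Real.rpow_mul he.le]
          congr 1
          simp only [if_true]
          ring
        · simp only [ht, Function.update_of_ne hl, if_neg hl, sub_zero]
          rw [← Real.rpow_mul he.le]
      rw [Finset.prod_congr rfl (fun l _ => h1 l), ← Real.rpow_sum_of_pos he]
      congr 1
      rw [Finset.sum_sub_distrib, ← Finset.mul_sum, Finset.sum_ite_eq' Finset.univ j]
      simp only [Finset.mem_univ, if_pos]
      have : (∑ i, α i) = s + 1 := by rw [hsdef]; ring
      rw [this]
      nlinarith [hβ]
    -- m · y + f y = e^β * (q · X q + f (X q))
    have hsum : (∑ l, m l * y l) = e ^ β * ∑ l, q l * X q l := by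
      rw [Finset.mul_sum]
      refine Finset.sum_congr rfl fun l _ => ?_
      by_cases hl : l = j
      · rw [hl]
        simp only [hm, hy, ht, Function.update_self]
        rw [show e * q j * (e ^ (β - 1) * X q j) = (e * e ^ (β - 1)) * (q j * X q j) by ring]
        rw [show e * e ^ (β - 1) = e ^ β by
          rw [show e * e ^ (β - 1) = e ^ (1:ℝ) * e ^ (β - 1) by rw [Real.rpow_one],
            ← Real.rpow_add he]; norm_num]
      · simp only [hm, hy, ht, Function.update_of_ne hl]
        ring
    have hfy : f y = e ^ β * f (X q) := by
      rw [hy, hscale t htpos (X q) (hXpos q hq), hprod]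
    calc W m = (∑ l, m l * X m l) + f (X m) := hW m
      _ ≤ (∑ l, m l * y l) + f y := hmin m hmpos y hypos
      _ = e ^ β * W q := by rw [hsum, hfy, hW q]; ring
  -- conclude
  have h1 := key p hp c hc
  set m : Fin d → ℝ := Function.update p j (c * p j) with hm
  have hmpos : ∀ l, 0 < m l := by
    intro l
    by_cases hl : l = j
    · rw [hl]; simp only [hm, Function.update_self]; exact mul_pos hc (hp j)
    · simpa [hm, Function.update_of_ne hl] using hp l
  have h2 := key m hmpos c⁻¹ (inv_pos.2 hc)
  have hmj : m j = c * p j := by simp [hm]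
  have hback : Function.update m j (c⁻¹ * m j) = p := by
    rw [hmj, hm, Function.update_idem, ← mul_assoc, inv_mul_cancel₀ hc.ne', one_mul,
      Function.update_eq_self]
  rw [hback, Real.inv_rpow hc.le] at h2
  have hbpos : 0 < c ^ β := Real.rpow_pos_of_pos hc _
  have h3 : c ^ β * W p ≤ W m := by
    have := mul_le_mul_of_nonneg_left h2 hbpos.le
    rwa [← mul_assoc, mul_inv_cancel₀ hbpos.ne', one_mul] at this
  exact le_antisymm h1 h3
end
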